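/- Let X = {F = 0} ⊂ P^n be a hypersurface of degree d over F_q with d ≤ q+1 and n ≥ 2, such that F is not a p-th power (p = char F_q). Then there exists an F_q-rational hyperplane H ⊂ P^n such that H is not contained in X and the restriction F|_H is not a p-th power. -/

import Mathlib

open MvPolynomial

section PD

variable {R : Type*} [CommRing R] {σ : Type*} [DecidableEq σ]

lemma coeff_pderiv_eq (i : σ) (β : σ →₀ ℕ) (f : MvPolynomial σ R) :
    coeff β (pderiv i f) = ((β i + 1 : ℕ) : R) * coeff (β + Finsupp.single i 1) f := by
  induction f using MvPolynomial.induction_on' with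
  | add p q hp hq => rw [map_add, coeff_add, coeff_add, hp, hq, mul_add]
  | monomial u a =>
    rw [pderiv_monomial, coeff_monomial, coeff_monomial]
    by_cases hu : u = β + Finsupp.single i 1
    · subst hu
      rw [if_pos (show (β + Finsupp.single i 1) - Finsupp.single i 1 = β by simp), if_pos rfl]
      simp [Finsupp.add_apply, Finsupp.single_eq_same, mul_comm]
    · rw [if_neg hu, mul_zero]
      by_cases hv : u - Finsupp.single i 1 = β
      · rw [if_pos hv]
        have hui : u i = 0 := by
          by_contra hui
          apply hu
          ext j
          have h1 : u j - (Finsupp.single i 1) j = β j := by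
            rw [← Finsupp.tsub_apply, hv]
          rw [Finsupp.add_apply]
          by_cases hj : i = j
          · subst hj
            rw [Finsupp.single_eq_same] at h1 ⊢
            omega
          · rw [Finsupp.single_eq_of_ne' hj] at h1 ⊢
            omega
        rw [hui]
        simp
      · rw [if_neg hv]

end PD

section Pth

variable {F : Type*} [Field F] [Fintype F] {σ : Type*} [DecidableEq σ] {p : ℕ}

lemma exists_pth_root_poly (hp : p.Prime) [CharP F p] (f : MvPolynomial σ F)
    (h : ∀ i, pderiv i f = 0) : ∃ g, f = g ^ p := by
  haveI : Fact p.Prime := ⟨hp⟩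
  haveI : ExpChar F p := .prime hp
  haveI : ExpChar (MvPolynomial σ F) p := .prime hp
  have hdvd : ∀ α ∈ f.support, ∀ i : σ, p ∣ α i := by
    intro α hα i
    by_cases h0 : α i = 0
    · simp [h0]
    have hc := coeff_pderiv_eq i (α - Finsupp.single i 1) f
    rw [h i, coeff_zero] at hc
    have hβ : (α - Finsupp.single i 1) + Finsupp.single i 1 = α := by
      ext j
      rw [Finsupp.add_apply, Finsupp.tsub_apply]
      by_cases hj : i = j
      · subst hj
        rw [Finsupp.single_eq_same]
        omega
      · rw [Finsupp.single_eq_of_ne' hj]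
        omega
    rw [hβ] at hc
    have hβi : ((α - Finsupp.single i 1) : σ →₀ ℕ) i + 1 = α i := by
      rw [Finsupp.tsub_apply, Finsupp.single_eq_same]
      omega
    rw [hβi] at hc
    rcases mul_eq_zero.mp hc.symm with h1 | h2
    · exact (CharP.cast_eq_zero_iff F p _).mp h1
    · exact absurd h2 (mem_support_iff.mp hα)
  refine ⟨∑ α ∈ f.support, monomial (α.mapRange (· / p) (Nat.zero_div p))
      ((frobeniusEquiv F p).symm (coeff α f)), ?_⟩
  rw [sum_pow_char]
  conv_lhs => rw [f.as_sum]
  apply Finset.sum_congr rfl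
  intro α hα
  rw [monomial_pow]
  have h1 : p • α.mapRange (· / p) (Nat.zero_div p) = α := by
    ext j
    rw [Finsupp.smul_apply, Finsupp.mapRange_apply, smul_eq_mul]
    exact Nat.mul_div_cancel' (hdvd α hα j)
  rw [h1]
  congr 1
  rw [← frobenius_def]
  exact ((frobeniusEquiv F p).apply_symm_apply _).symm

end Pth

section Chain

variable {R : Type*} [CommRing R]

lemma pderiv_aeval_eq {ι τ : Type*} [Fintype ι] [DecidableEq ι] [DecidableEq τ]
    (S : ι → MvPolynomial τ R) (j : τ) (f : MvPolynomial ι R) :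
    pderiv j (aeval S f) = ∑ i, aeval S (pderiv i f) * pderiv j (S i) := by
  induction f using MvPolynomial.induction_on with
  | C a => simp [aeval_C]
  | add p q hp hq =>
    simp only [map_add, hp, hq, add_mul, Finset.sum_add_distrib]
  | mul_X p i hp =>
    have hterm : ∀ i' : ι, aeval S (pderiv i' (p * X i)) * pderiv j (S i')
        = aeval S (pderiv i' p) * pderiv j (S i') * S i
          + (if i = i' then aeval S p * pderiv j (S i') else 0) := by
      intro i'
      rw [pderiv_mul, pderiv_X, map_add, map_mul, aeval_X, map_mul, Pi.single_apply]
      by_cases h : i = i'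
      · subst h
        simp
        ring
      · simp [h]
        ring
    rw [map_mul, aeval_X, pderiv_mul, hp]
    rw [Finset.sum_congr rfl (fun i' _ => hterm i'), Finset.sum_add_distrib,
      Finset.sum_ite_eq, if_pos (Finset.mem_univ i), Finset.sum_mul]

end Chain

noncomputable section PhiK

variable {F : Type*} [CommRing F] {n : ℕ}

/-- The iso separating out the variable `k`. -/
def phiK (n : ℕ) (k : Fin (n + 1)) :
    MvPolynomial (Fin (n + 1)) F ≃ₐ[F] Polynomial (MvPolynomial (Fin n) F) :=
  (renameEquiv F ((finSuccEquiv' k).trans (_root_.finSuccEquiv n).symm)).trans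
    (MvPolynomial.finSuccEquiv F n)

lemma phiK_X_self (k : Fin (n + 1)) :
    phiK n k (X k : MvPolynomial (Fin (n+1)) F) = Polynomial.X := by
  simp [phiK, MvPolynomial.finSuccEquiv_X_zero]

lemma phiK_X_succAbove (k : Fin (n + 1)) (j : Fin n) :
    phiK n k (X (k.succAbove j) : MvPolynomial (Fin (n+1)) F) = Polynomial.C (X j) := by
  simp [phiK, Fin.zero_succAbove, MvPolynomial.finSuccEquiv_X_succ]

lemma phiK_C (k : Fin (n + 1)) (a : F) :
    phiK n k (C a : MvPolynomial (Fin (n+1)) F) = Polynomial.C (C a) := by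
  rw [← MvPolynomial.algebraMap_eq, AlgEquiv.commutes, Polynomial.algebraMap_apply,
    MvPolynomial.algebraMap_eq]

lemma natDegree_phiK (k : Fin (n + 1)) (h : MvPolynomial (Fin (n+1)) F) :
    (phiK n k h).natDegree ≤ h.totalDegree := by
  rw [phiK, AlgEquiv.trans_apply, natDegree_finSuccEquiv, renameEquiv_apply]
  exact le_trans (degreeOf_le_totalDegree _ 0) (totalDegree_rename_le _ h)

lemma phiK_coeff_eq_C (k : Fin (n + 1)) {m : ℕ} (h : MvPolynomial (Fin (n+1)) F)
    (hdeg : h.totalDegree ≤ m) :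
    (phiK n k h).coeff m = C (coeff 0 ((phiK n k h).coeff m)) := by
  classical
  apply MvPolynomial.ext
  intro μ
  by_cases hμ : μ = 0
  · subst hμ
    rw [coeff_C, if_pos rfl]
  · rw [coeff_C, if_neg (fun hh => hμ hh.symm)]
    rw [phiK, AlgEquiv.trans_apply, renameEquiv_apply, finSuccEquiv_coeff_coeff]
    apply coeff_eq_zero_of_totalDegree_lt
    have h1 : totalDegree (rename (⇑((finSuccEquiv' k).trans (_root_.finSuccEquiv n).symm)) h)
        ≤ m := le_trans (totalDegree_rename_le _ h) hdeg
    have h2 : (∑ i ∈ (Finsupp.cons m μ).support, (Finsupp.cons m μ) i)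
        = m + ∑ i ∈ μ.support, μ i := by
      have := Finsupp.sum_cons n μ m
      simpa [Finsupp.sum] using this
    rw [h2]
    have h3 : ∑ i ∈ μ.support, μ i ≠ 0 := by
      intro hz
      apply hμ
      ext j
      by_cases hj : j ∈ μ.support
      · exact Finset.sum_eq_zero_iff.mp hz j hj
      · simpa using Finsupp.notMem_support_iff.mp hj
    omega

/-- The matrix of the hyperplane `x_k = sum c_j x_{succAbove j}`. -/
def Mmat (n : ℕ) (k : Fin (n + 1)) (c : Fin n → F) : Matrix (Fin (n + 1)) (Fin n) F :=
  fun i j => if i = k then c j else if i = k.succAbove j then 1 else 0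

lemma Mmat_row (k : Fin (n + 1)) (c : Fin n → F) (j' j : Fin n) :
    Mmat n k c (k.succAbove j') j = if j' = j then 1 else 0 := by
  rw [Mmat]
  simp only [if_neg (Fin.succAbove_ne k j'), Fin.succAbove_right_inj]

lemma Mmat_mulVec (k : Fin (n + 1)) (c : Fin n → F) (v : Fin n → F)
    (j' : Fin n) : (Mmat n k c).mulVec v (k.succAbove j') = v j' := by
  classical
  have hterm : ∀ j : Fin n, Mmat n k c (k.succAbove j') j * v j
      = if j' = j then v j else 0 := by
    intro j
    rw [Mmat_row]
    split <;> simp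
  simp only [Matrix.mulVec, dotProduct, hterm]
  simp [Finset.sum_ite_eq]

lemma Mmat_injective (k : Fin (n + 1)) (c : Fin n → F) :
    Function.Injective (Mmat n k c).mulVec := by
  intro v w h
  funext j'
  rw [← Mmat_mulVec k c v j', ← Mmat_mulVec k c w j', h]

lemma phiK_aeval (k : Fin (n + 1)) (c : Fin n → F) (h : MvPolynomial (Fin (n+1)) F) :
    aeval (fun i => ∑ j, C (Mmat n k c i j) * X j) h
      = Polynomial.eval (∑ j, C (c j) * X j) (phiK n k h) := by
  classical
  induction h using MvPolynomial.induction_on with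
  | C a => rw [aeval_C, phiK_C, Polynomial.eval_C, MvPolynomial.algebraMap_eq]
  | add p q hp hq => rw [map_add, map_add, Polynomial.eval_add, hp, hq]
  | mul_X p i hp =>
    rw [map_mul, map_mul, Polynomial.eval_mul, hp, aeval_X]
    congr 1
    rcases eq_or_ne i k with rfl | hik
    · rw [phiK_X_self, Polynomial.eval_X]
      apply Finset.sum_congr rfl
      intro j _
      rw [Mmat, if_pos rfl]
    · obtain ⟨j', rfl⟩ := Fin.exists_succAbove_eq hik
      rw [phiK_X_succAbove, Polynomial.eval_C]
      have hterm : ∀ j : Fin n, (C (Mmat n k c (k.succAbove j') j) * X j : MvPolynomial (Fin n) F)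
          = if j' = j then X j else 0 := by
        intro j
        rw [Mmat_row]
        split <;> simp
      simp only [hterm]
      simp [Finset.sum_ite_eq]

lemma pderiv_subst (k : Fin (n + 1)) (c : Fin n → F) (f : MvPolynomial (Fin (n+1)) F)
    (j : Fin n) :
    pderiv j (aeval (fun i => ∑ j', C (Mmat n k c i j') * X j') f)
      = C (c j) * aeval (fun i => ∑ j', C (Mmat n k c i j') * X j') (pderiv k f)
        + aeval (fun i => ∑ j', C (Mmat n k c i j') * X j') (pderiv (k.succAbove j) f) := by
  classical
  rw [pderiv_aeval_eq]
  have hDj : ∀ i, pderiv j (∑ j', (C (Mmat n k c i j') * X j' : MvPolynomial (Fin n) F))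
      = C (Mmat n k c i j) := by
    intro i
    rw [map_sum]
    have hterm : ∀ j' : Fin n,
        pderiv j (C (Mmat n k c i j') * X j' : MvPolynomial (Fin n) F)
          = if j' = j then C (Mmat n k c i j') else 0 := by
      intro j'
      rw [pderiv_C_mul, pderiv_X, Pi.single_apply]
      split <;> simp
    simp only [hterm]
    simp [Finset.sum_ite_eq']
  simp only [hDj]
  rw [Fin.sum_univ_succAbove _ k]
  congr 1
  · rw [Mmat, if_pos rfl, mul_comm]
  · have hterm : ∀ j' : Fin n,
        aeval (fun i => ∑ j', C (Mmat n k c i j') * X j') (pderiv (k.succAbove j') f)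
            * C (Mmat n k c (k.succAbove j') j)
          = if j' = j then
              aeval (fun i => ∑ j', C (Mmat n k c i j') * X j') (pderiv (k.succAbove j') f)
            else 0 := by
      intro j'
      rw [Mmat_row]
      split <;> simp
    simp only [hterm]
    simp [Finset.sum_ite_eq']

end PhiK

section Core

/-- The core algebraic lemma, over a big field `L`. -/
lemma core_lemma {F L : Type*} [Field F] [Fintype F] [Field L] {p q : ℕ}
    [CharP L p] (hp : p.Prime) (hq : Fintype.card F = q) (hpq : ∃ v : ℕ, q = p ^ v)
    (ι : F →+* L) (a b : L) (hb : b ≠ 0) (P G : Polynomial L)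
    (hdeg : ∀ γ : F, (P + Polynomial.C (ι γ) * G).natDegree ≤ q)
    (hcoe : ∀ γ : F, ∃ s : F, (P + Polynomial.C (ι γ) * G).coeff q = ι s)
    (hev : ∀ γ t : F, (P + Polynomial.C (ι γ) * G).eval (ι γ * a + ι t * b) = 0) :
    ∃ l0 l1 : F, G
      = Polynomial.C (ι (l1 - l0)) * (Polynomial.X ^ q - Polynomial.C (b ^ (q-1)) * Polynomial.X)
        - Polynomial.C (ι l1 * (a ^ q - a * b ^ (q-1))) := by
  haveI : Fact p.Prime := ⟨hp⟩
  haveI : ExpChar L p := .prime hp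
  obtain ⟨v, rfl⟩ := hpq
  have hq2 : 2 ≤ p ^ v := by rw [← hq]; exact Fintype.one_lt_card
  have hγq : ∀ x : F, ι x ^ p ^ v = ι x := by
    intro x
    rw [← map_pow, ← hq, FiniteField.pow_card]
  have hmain : ∀ γ : F, ∃ s : F, P + Polynomial.C (ι γ) * G
      = Polynomial.C (ι s) * (Polynomial.X ^ p ^ v
        + (Polynomial.C (ι γ * a * b ^ (p ^ v - 1)) - Polynomial.C (ι γ * a ^ p ^ v)
          - Polynomial.C (b ^ (p ^ v - 1)) * Polynomial.X)) := by
    intro γ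
    obtain ⟨s, hs⟩ := hcoe γ
    refine ⟨s, ?_⟩
    set Ρ : Polynomial L := Polynomial.C (ι γ * a * b ^ (p ^ v - 1))
      - Polynomial.C (ι γ * a ^ p ^ v) - Polynomial.C (b ^ (p ^ v - 1)) * Polynomial.X with hΡ
    have hΡdeg : Ρ.natDegree ≤ 1 := by
      rw [hΡ]
      refine le_trans (Polynomial.natDegree_sub_le _ _) (max_le
        (le_trans (Polynomial.natDegree_sub_le _ _) (max_le ?_ ?_)) ?_)
      · rw [Polynomial.natDegree_C]; omega
      · rw [Polynomial.natDegree_C]; omega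
      · refine le_trans (Polynomial.natDegree_C_mul_le _ _) ?_
        rw [Polynomial.natDegree_X]
    have hΞq : ∀ m, p ^ v ≤ m →
        (Polynomial.X ^ p ^ v + Ρ).coeff m = if m = p ^ v then 1 else 0 := by
      intro m hm
      rw [Polynomial.coeff_add, Polynomial.coeff_X_pow,
        Polynomial.coeff_eq_zero_of_natDegree_lt (lt_of_le_of_lt hΡdeg (by omega)), add_zero]
    have hΞeval : ∀ t : F, (Polynomial.X ^ p ^ v + Ρ).eval (ι γ * a + ι t * b) = 0 := by
      intro t
      have hfr : (ι γ * a + ι t * b) ^ p ^ v = ι γ * a ^ p ^ v + ι t * b ^ p ^ v := by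
        rw [add_pow_char_pow, mul_pow, mul_pow, hγq, hγq]
      have hbq : b ^ (p ^ v - 1) * b = b ^ p ^ v := by
        rw [← pow_succ]
        congr 1
        omega
      rw [hΡ]
      simp only [Polynomial.eval_add, Polynomial.eval_sub, Polynomial.eval_pow,
        Polynomial.eval_X, Polynomial.eval_C, Polynomial.eval_mul]
      rw [hfr]
      linear_combination (-(ι t)) * hbq
    set Z : Polynomial L := (P + Polynomial.C (ι γ) * G)
      - Polynomial.C (ι s) * (Polynomial.X ^ p ^ v + Ρ) with hZdef
    have hZ0 : Z = 0 := by
      by_cases hz : Z = 0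
      · exact hz
      apply Polynomial.eq_zero_of_natDegree_lt_card_of_eval_eq_zero Z
        (f := fun t : F => ι γ * a + ι t * b)
      · intro t t' htt
        have h1 : (ι t - ι t') * b = 0 := by
          simp only at htt
          linear_combination htt
        have h2 : ι t = ι t' := by
          rcases mul_eq_zero.mp h1 with h | h
          · linear_combination h
          · exact absurd h hb
        exact ι.injective h2
      · intro t
        rw [hZdef, Polynomial.eval_sub, hev γ t, Polynomial.eval_mul, Polynomial.eval_C,
          hΞeval t, mul_zero, sub_zero]
      · rw [hq]
        rw [Polynomial.natDegree_lt_iff_degree_lt hz, Polynomial.degree_lt_iff_coeff_zero]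
        intro m hm
        have hm' : p ^ v ≤ m := by exact_mod_cast hm
        rw [hZdef, Polynomial.coeff_sub, Polynomial.coeff_C_mul, hΞq m hm']
        rcases Nat.lt_or_ge (p ^ v) m with hlt | hge
        · rw [Polynomial.coeff_eq_zero_of_natDegree_lt (lt_of_le_of_lt (hdeg γ) hlt),
            if_neg (by omega), mul_zero, sub_zero]
        · have hme : m = p ^ v := le_antisymm hge hm'
          subst hme
          rw [hs, if_pos rfl, mul_one, sub_self]
    rw [hZdef] at hZ0
    exact sub_eq_zero.mp hZ0
  obtain ⟨l0, hl0⟩ := hmain 0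
  obtain ⟨l1, hl1⟩ := hmain 1
  refine ⟨l0, l1, ?_⟩
  have hG : G = (P + Polynomial.C (ι 1) * G) - (P + Polynomial.C (ι 0) * G) := by
    rw [map_one, map_zero]
    ring_nf
    simp
  rw [hG, hl0, hl1]
  simp only [map_zero, map_one, map_sub, map_mul, map_pow, map_add, zero_mul, mul_zero,
    sub_zero, add_zero, one_mul, Polynomial.C_0]
  ring

end Core

section Shape

lemma shape_coeffs {L : Type*} [CommRing L] (q : ℕ) (hq2 : 2 ≤ q) (c d e : L) :
    (Polynomial.C c * (Polynomial.X ^ q - Polynomial.C d * Polynomial.X)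
        - Polynomial.C e).coeff q = c
    ∧ (Polynomial.C c * (Polynomial.X ^ q - Polynomial.C d * Polynomial.X)
        - Polynomial.C e).coeff 1 = -(c * d)
    ∧ (Polynomial.C c * (Polynomial.X ^ q - Polynomial.C d * Polynomial.X)
        - Polynomial.C e).coeff 0 = -e := by
  have h1q : ¬ ((1:ℕ) = q) := by omega
  have hq1 : ¬ (q = 1) := by omega
  have hq0 : ¬ (q = 0) := by omega
  have h0q : ¬ ((0:ℕ) = q) := by omega
  refine ⟨?_, ?_, ?_⟩ <;>
    simp [Polynomial.coeff_sub, Polynomial.coeff_C_mul, Polynomial.mul_coeff_zero,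
      Polynomial.coeff_X_pow, Polynomial.coeff_X, Polynomial.coeff_C, h1q, hq1, hq0, h0q]

end Shape

open MvPolynomial

set_option maxHeartbeats 1600000 in
set_option synthInstance.maxHeartbeats 1000000 in
/-- Let X = {F = 0} ⊂ P^n be a hypersurface of degree d over F_q with d ≤ q+1,
n ≥ 2, and F not a p-th power. Then there is an F_q-hyperplane H (given here by
an injective linear parametrization M : F_q^n → F_q^{n+1}) not contained in X
such that the restriction F|_H is not a p-th power. -/
theorem stmt7 {F : Type*} [Field F] [Fintype F] (q p n d : ℕ)
    (hq : Fintype.card F = q) (hp : p = ringChar F)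
    (hn : 2 ≤ n) (f : MvPolynomial (Fin (n + 1)) F) (hhom : f.IsHomogeneous d)
    (hd : d ≤ q + 1)
    (hnp : ¬ ∃ g : MvPolynomial (Fin (n + 1)) F, f = g ^ p) :
    ∃ M : Matrix (Fin (n + 1)) (Fin n) F,
      Function.Injective M.mulVec ∧
      aeval (fun i => ∑ j, C (M i j) * X j) f ≠ 0 ∧
      ¬ ∃ g : MvPolynomial (Fin n) F,
        aeval (fun i => ∑ j, C (M i j) * X j) f = g ^ p := by
  classical
  haveI hcF : CharP F p := by rw [hp]; exact ringChar.charP F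
  obtain ⟨v, hpprime, hcard⟩ := FiniteField.card F p
  have hq2 : 2 ≤ q := by rw [← hq]; exact Fintype.one_lt_card
  have hpq : ∃ w : ℕ, q = p ^ w := ⟨v, by rw [← hq, hcard]⟩
  obtain ⟨k, hk⟩ : ∃ k, pderiv k f ≠ 0 := by
    by_contra hcon
    push_neg at hcon
    exact hnp (exists_pth_root_poly hpprime f hcon)
  -- degree bound on the partial derivatives
  have hhom' : ∀ i : Fin (n + 1), (pderiv i f).IsHomogeneous (d - 1) := by
    intro i u hu
    have hco : coeff (u + Finsupp.single i 1) f ≠ 0 := by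
      rw [coeff_pderiv_eq] at hu
      intro hzz
      rw [hzz, mul_zero] at hu
      exact hu rfl
    have h2 := hhom hco
    rw [map_add] at h2
    have h3 : (Finsupp.weight 1) (Finsupp.single i 1) = 1 := by
      rw [Finsupp.weight_apply, Finsupp.sum_single_index] <;> simp
    rw [h3] at h2
    show (Finsupp.weight 1) u = d - 1
    omega
  have hgdeg : ∀ (i : Fin (n + 1)) (γ : F),
      (pderiv i f + C γ * pderiv k f).totalDegree ≤ q := by
    intro i γ
    have h1 : ∀ i' : Fin (n + 1), (pderiv i' f).totalDegree ≤ d - 1 := by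
      intro i'
      by_cases h0 : pderiv i' f = 0
      · rw [h0]
        simp
      · exact le_of_eq ((hhom' i').totalDegree h0)
    refine le_trans (totalDegree_add _ _) (max_le (le_trans (h1 i) (by omega)) ?_)
    refine le_trans (totalDegree_mul _ _) ?_
    rw [totalDegree_C]
    exact le_trans (by simpa using h1 k) (by omega)
  by_contra hcon
  push_neg at hcon
  have hpth : ∀ c : Fin n → F, ∀ j : Fin n,
      pderiv j (aeval (fun i => ∑ j', C (Mmat n k c i j') * X j') f) = 0 := by
    intro c j
    by_cases h0 : aeval (fun i => ∑ j', C (Mmat n k c i j') * X j') f = 0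
    · rw [h0, map_zero]
    obtain ⟨g, hg⟩ := hcon (Mmat n k c) (Mmat_injective k c) h0
    rw [hg, pderiv_pow]
    rw [show ((p : ℕ) : MvPolynomial (Fin n) F) = 0 from CharP.cast_eq_zero _ p]
    ring
  have key : ∀ c : Fin n → F, ∀ j : Fin n,
      Polynomial.eval (∑ j', C (c j') * X j')
          (phiK n k (pderiv (k.succAbove j) f + C (c j) * pderiv k f)) = 0 := by
    intro c j
    have h1 := pderiv_subst k c f j
    rw [hpth c j, phiK_aeval, phiK_aeval] at h1
    rw [map_add, map_mul, phiK_C, Polynomial.eval_add, Polynomial.eval_mul, Polynomial.eval_C]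
    linear_combination -h1
  -- move to the fraction field
  set A := MvPolynomial (Fin n) F with hA
  set L := FractionRing A with hL
  haveI : CharP L p := charP_of_injective_ringHom (IsFractionRing.injective A L) p
  set ιA : A →+* L := algebraMap A L with hιAdef
  have hιA : Function.Injective ιA := IsFractionRing.injective A L
  set ι : F →+* L := ιA.comp (C : F →+* A) with hιdef
  set θ : Polynomial A →+* Polynomial L := Polynomial.mapRingHom ιA with hθdef
  have hθ : Function.Injective θ := by
    intro x y hxy
    exact Polynomial.map_injective ιA hιA hxy
  set j1 : Fin n := ⟨0, by omega⟩ with hj1def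
  set j2 : Fin n := ⟨1, by omega⟩ with hj2def
  have hj12 : j1 ≠ j2 := by
    intro h
    have := congrArg Fin.val h
    simp [hj1def, hj2def] at this
  set xa : L := ιA (X j1) with hxadef
  set xb : L := ιA (X j2) with hxbdef
  have hxb0 : xb ≠ 0 := by
    intro h
    exact MvPolynomial.X_ne_zero j2 (hιA (h.trans (map_zero ιA).symm))
  have hxa0 : xa ≠ 0 := by
    intro h
    exact MvPolynomial.X_ne_zero j1 (hιA (h.trans (map_zero ιA).symm))
  -- evaluation transfer
  have hevalmap : ∀ (Q : Polynomial A) (u : A), (θ Q).eval (ιA u) = ιA (Q.eval u) := by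
    intro Q u
    show (Q.map ιA).eval (ιA u) = ιA (Q.eval u)
    rw [Polynomial.eval_map, Polynomial.eval₂_hom]
  -- the two-parameter family of coefficient vectors
  set cf : F → F → Fin n → F := fun γ t j => if j = j1 then γ else if j = j2 then t else 0
    with hcf
  have hcfj1 : ∀ γ t, cf γ t j1 = γ := by
    intro γ t
    simp [hcf]
  have hcfj2 : ∀ γ t, cf γ t j2 = t := by
    intro γ t
    simp [hcf, Ne.symm hj12]
  have hU : ∀ γ t : F, (∑ j', C (cf γ t j') * X j' : A) = C γ * X j1 + C t * X j2 := by
    intro γ t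
    have hterm : ∀ j' : Fin n, (C (cf γ t j') * X j' : A)
        = (if j' = j1 then C γ * X j1 else 0) + (if j' = j2 then C t * X j2 else 0) := by
      intro j'
      by_cases h1 : j' = j1
      · subst h1
        simp [hcf, hj12]
      · by_cases h2 : j' = j2
        · subst h2
          simp [hcf, Ne.symm hj12]
        · simp [hcf, h1, h2]
    simp only [hterm]
    rw [Finset.sum_add_distrib, Finset.sum_ite_eq', Finset.sum_ite_eq']
    simp
  have hQrw : ∀ (i : Fin (n + 1)) (γ : F),
      θ (phiK n k (pderiv i f + C γ * pderiv k f))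
        = θ (phiK n k (pderiv i f)) + Polynomial.C (ι γ) * θ (phiK n k (pderiv k f)) := by
    intro i γ
    have h1 : phiK n k (pderiv i f + C γ * pderiv k f)
        = phiK n k (pderiv i f) + Polynomial.C (C γ) * phiK n k (pderiv k f) := by
      rw [map_add, map_mul, phiK_C]
    rw [h1, map_add, map_mul]
    congr 2
    show (Polynomial.C (C γ) : Polynomial A).map ιA = Polynomial.C (ι γ)
    rw [Polynomial.map_C]
    rfl
  have hdegθ : ∀ (i : Fin (n + 1)) (γ : F),
      (θ (phiK n k (pderiv i f)) + Polynomial.C (ι γ) * θ (phiK n k (pderiv k f))).natDegree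
        ≤ q := by
    intro i γ
    rw [← hQrw]
    refine le_trans ?_ (le_trans (natDegree_phiK k (pderiv i f + C γ * pderiv k f))
      (hgdeg i γ))
    show ((phiK n k (pderiv i f + C γ * pderiv k f)).map ιA).natDegree ≤ _
    exact Polynomial.natDegree_map_le
  have hcoeθ : ∀ (i : Fin (n + 1)) (γ : F), ∃ s : F,
      (θ (phiK n k (pderiv i f)) + Polynomial.C (ι γ) * θ (phiK n k (pderiv k f))).coeff q
        = ι s := by
    intro i γ
    refine ⟨coeff 0 ((phiK n k (pderiv i f + C γ * pderiv k f)).coeff q), ?_⟩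
    rw [← hQrw]
    show ((phiK n k (pderiv i f + C γ * pderiv k f)).map ιA).coeff q = _
    rw [Polynomial.coeff_map]
    conv_lhs => rw [phiK_coeff_eq_C k _ (hgdeg i γ)]
    rfl
  -- the evaluation conditions
  have hevgen : ∀ (jj : Fin n) (γ t : F),
      ιA (Polynomial.eval (C γ * X j1 + C t * X j2)
        (phiK n k (pderiv (k.succAbove jj) f + C (cf γ t jj) * pderiv k f))) = 0 := by
    intro jj γ t
    have h1 := key (cf γ t) jj
    rw [hU γ t] at h1
    rw [h1, map_zero]
  have hev1 : ∀ γ t : F,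
      (θ (phiK n k (pderiv (k.succAbove j1) f))
        + Polynomial.C (ι γ) * θ (phiK n k (pderiv k f))).eval (ι γ * xa + ι t * xb) = 0 := by
    intro γ t
    have h2 := hevgen j1 γ t
    rw [hcfj1, ← hevalmap, hQrw] at h2
    rw [map_add, map_mul, map_mul] at h2
    exact h2
  have hev2 : ∀ γ t : F,
      (θ (phiK n k (pderiv (k.succAbove j2) f))
        + Polynomial.C (ι γ) * θ (phiK n k (pderiv k f))).eval (ι γ * xb + ι t * xa) = 0 := by
    intro γ t
    have h2 := hevgen j2 t γ
    rw [hcfj2, ← hevalmap, hQrw] at h2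
    rw [map_add, map_mul, map_mul] at h2
    rw [add_comm (ι γ * xb) (ι t * xa)]
    exact h2
  obtain ⟨l0, l1, hG1⟩ := core_lemma hpprime hq hpq ι xa xb hxb0
    (θ (phiK n k (pderiv (k.succAbove j1) f))) (θ (phiK n k (pderiv k f)))
    (hdegθ (k.succAbove j1)) (hcoeθ (k.succAbove j1)) hev1
  obtain ⟨m0, m1, hG2⟩ := core_lemma hpprime hq hpq ι xb xa hxa0
    (θ (phiK n k (pderiv (k.succAbove j2) f))) (θ (phiK n k (pderiv k f)))
    (hdegθ (k.succAbove j2)) (hcoeθ (k.succAbove j2)) hev2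
  -- compare coefficients
  have heq := hG1.symm.trans hG2
  obtain ⟨hc1q, hc11, hc10⟩ := shape_coeffs q hq2 (ι (l1 - l0)) (xb ^ (q-1))
    (ι l1 * (xa ^ q - xa * xb ^ (q-1)))
  obtain ⟨hc2q, hc21, hc20⟩ := shape_coeffs q hq2 (ι (m1 - m0)) (xa ^ (q-1))
    (ι m1 * (xb ^ q - xb * xa ^ (q-1)))
  have eQ : ι (l1 - l0) = ι (m1 - m0) := by
    have h := congrArg (fun P : Polynomial L => P.coeff q) heq
    rw [hc1q, hc2q] at h
    exact h
  have e1 : ι (l1 - l0) * xb ^ (q-1) = ι (m1 - m0) * xa ^ (q-1) := by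
    have h := congrArg (fun P : Polynomial L => P.coeff 1) heq
    rw [hc11, hc21] at h
    exact neg_inj.mp h
  have e0 : ι l1 * (xa ^ q - xa * xb ^ (q-1)) = ι m1 * (xb ^ q - xb * xa ^ (q-1)) := by
    have h := congrArg (fun P : Polynomial L => P.coeff 0) heq
    rw [hc10, hc20] at h
    exact neg_inj.mp h
  have hne : xa ^ (q-1) ≠ xb ^ (q-1) := by
    intro hh
    have h1 : ((X j1 : A) ^ (q-1)) = (X j2 : A) ^ (q-1) := by
      apply hιA
      rw [map_pow, map_pow]
      exact hh
    have hc := congrArg (coeff (Finsupp.single j1 (q-1))) h1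
    rw [MvPolynomial.X_pow_eq_monomial, MvPolynomial.X_pow_eq_monomial, coeff_monomial,
      coeff_monomial, if_pos rfl,
      if_neg (fun hh2 => hj12 ((Finsupp.single_left_inj (by omega)).mp hh2).symm)] at hc
    exact one_ne_zero hc
  have hw0 : ι (l1 - l0) = 0 := by
    rw [← eQ] at e1
    have hz : ι (l1 - l0) * (xb ^ (q-1) - xa ^ (q-1)) = 0 := by
      linear_combination e1
    rcases mul_eq_zero.mp hz with h | h
    · exact h
    · exact absurd (sub_eq_zero.mp h) (Ne.symm hne)
  have hr1 : q = (q - 1) + 1 := by omega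
  have hprod : (ι l1 * xa + ι m1 * xb) * (xa ^ (q-1) - xb ^ (q-1)) = 0 := by
    have hxa' : xa ^ q = xa ^ (q-1) * xa := by rw [← pow_succ, ← hr1]
    have hxb' : xb ^ q = xb ^ (q-1) * xb := by rw [← pow_succ, ← hr1]
    linear_combination e0 - ι l1 * hxa' + ι m1 * hxb'
  have hsum0 : ι l1 * xa + ι m1 * xb = 0 := by
    rcases mul_eq_zero.mp hprod with h | h
    · exact h
    · exact absurd (sub_eq_zero.mp h) hne
  have hl10 : l1 = 0 := by
    have hA0 : (C l1 * X j1 + C m1 * X j2 : A) = 0 := by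
      apply hιA
      rw [map_add, map_mul, map_mul, map_zero]
      exact hsum0
    have hco := congrArg (coeff (Finsupp.single j1 1)) hA0
    rw [coeff_add, coeff_C_mul, coeff_C_mul, coeff_X', coeff_X', if_pos rfl,
      if_neg (fun hh2 => hj12 ((Finsupp.single_left_inj one_ne_zero).mp hh2).symm),
      coeff_zero] at hco
    simpa using hco
  have hG0 : θ (phiK n k (pderiv k f)) = 0 := by
    rw [hG1, hw0, hl10, map_zero]
    simp
  apply hk
  have h1 : phiK n k (pderiv k f) = phiK n k 0 := by
    apply hθ
    rw [hG0]
    exact (map_zero θ).symm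
  exact (phiK n k).injective h1
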